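/- Let A ∈ ℂ^{n×n} be Schur stable and B ∈ ℂ^{n×m}. If there exist X ≻ 0 (positive definite), W ≻ 0, and R such that A X A* − X + B R* A* + A R B* + B W B* = 0 and [X R; R* W] ⪰ 0, then (A, B) is controllable. -/

import Mathlib

open Matrix
open scoped ComplexOrder

/-- The controllability matrix `[B, AB, …, A^{n-1}B]`. -/
noncomputable def ctrbMatrix {n m : ℕ} (A : Matrix (Fin n) (Fin n) ℂ)
    (B : Matrix (Fin n) (Fin m) ℂ) : Matrix (Fin n) (Fin n × Fin m) ℂ :=
  Matrix.of fun i kj => ((A ^ (kj.1 : ℕ)) * B) i kj.2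

section Aux

variable {n m : ℕ}

lemma vecMul_finset_sum {ι : Type*} (s : Finset ι) (v : Fin n → ℂ)
    (f : ι → Matrix (Fin n) (Fin m) ℂ) :
    v ᵥ* (∑ i ∈ s, f i) = ∑ i ∈ s, v ᵥ* f i := by
  classical
  induction s using Finset.induction_on with
  | empty => simp
  | insert _ _ h ih => simp [Finset.sum_insert h, Matrix.vecMul_add, ih]

lemma vecMul_smul_matrix (v : Fin n → ℂ) (c : ℂ) (M : Matrix (Fin n) (Fin m) ℂ) :
    v ᵥ* (c • M) = c • (v ᵥ* M) := by
  ext j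
  simp [Matrix.vecMul, dotProduct, Finset.mul_sum, mul_left_comm]

lemma pow_card_eq_sum (A : Matrix (Fin n) (Fin n) ℂ) :
    A ^ n = ∑ i ∈ Finset.range n, (-(A.charpoly.coeff i)) • A ^ i := by
  have h0 := A.aeval_self_charpoly
  rw [Polynomial.aeval_eq_sum_range, A.charpoly_natDegree_eq_dim, Fintype.card_fin,
      Finset.sum_range_succ] at h0
  have hd : A.charpoly.natDegree = n := by
    rw [A.charpoly_natDegree_eq_dim, Fintype.card_fin]
  have h1 : A.charpoly.coeff n = 1 := by
    have := A.charpoly_monic.coeff_natDegree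
    rwa [hd] at this
  rw [h1, one_smul] at h0
  have := eq_neg_of_add_eq_zero_right h0
  rw [this]
  simp [neg_smul, Finset.sum_neg_distrib]

lemma vecMul_pow_zero (A : Matrix (Fin n) (Fin n) ℂ) (B : Matrix (Fin n) (Fin m) ℂ)
    (v : Fin n → ℂ) (h : ∀ k < n, v ᵥ* (A ^ k * B) = 0) :
    ∀ k, v ᵥ* (A ^ k * B) = 0 := by
  intro k
  induction k using Nat.strong_induction_on with
  | _ k ih =>
    rcases lt_or_ge k n with hk | hk
    · exact h k hk
    · have hsplit : A ^ k * B =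
          ∑ i ∈ Finset.range n, (-(A.charpoly.coeff i)) • (A ^ (k - n + i) * B) := by
        have hpow : A ^ k = A ^ (k - n) * A ^ n := by
          rw [← pow_add, Nat.sub_add_cancel hk]
        rw [hpow, pow_card_eq_sum]
        rw [Finset.mul_sum, Matrix.sum_mul]
        refine Finset.sum_congr rfl fun i _ => ?_
        rw [mul_smul_comm, Matrix.smul_mul, ← pow_add]
      rw [hsplit, vecMul_finset_sum]
      refine Finset.sum_eq_zero fun i hi => ?_
      have hlt : k - n + i < k := by
        have : i < n := Finset.mem_range.mp hi
        omega
      rw [vecMul_smul_matrix, ih _ hlt, smul_zero]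

lemma eig_contra (A : Matrix (Fin n) (Fin n) ℂ) (B : Matrix (Fin n) (Fin m) ℂ)
    (hA : spectralRadius ℂ A < 1)
    (X : Matrix (Fin n) (Fin n) ℂ) (R : Matrix (Fin n) (Fin m) ℂ)
    (W : Matrix (Fin m) (Fin m) ℂ) (hX : X.PosDef)
    (heq : A * X * Aᴴ - X + B * Rᴴ * Aᴴ + A * R * Bᴴ + B * W * Bᴴ = 0)
    (v : Fin n → ℂ) (hv : ∀ k, v ᵥ* (A ^ k * B) = 0) : v = 0 := by
  by_contra hv0
  -- the invariant subspace
  set V : Submodule ℂ (Fin n → ℂ) :=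
    { carrier := {w | ∀ k, w ᵥ* (A ^ k * B) = 0}
      add_mem' := fun ha hb k => by
        rw [Matrix.add_vecMul, ha k, hb k, add_zero]
      zero_mem' := fun k => Matrix.zero_vecMul _
      smul_mem' := fun c a ha k => by
        rw [Matrix.smul_vecMul, ha k, smul_zero] } with hV
  have hvV : v ∈ V := hv
  haveI : Nontrivial V := nontrivial_of_ne ⟨v, hvV⟩ 0 (by
    simp only [ne_eq, Submodule.mk_eq_zero]
    exact hv0)
  -- the endomorphism w ↦ w ᵥ* A on V
  set f : Module.End ℂ V :=
    { toFun := fun w => ⟨w.1 ᵥ* A, fun k => by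
        rw [Matrix.vecMul_vecMul]
        have hcomm : A * (A ^ k * B) = A ^ (k + 1) * B := by
          rw [← Matrix.mul_assoc, ← pow_succ']
        rw [hcomm]
        exact w.2 (k + 1)⟩
      map_add' := fun a b => Subtype.ext
        (by simpa using Matrix.add_vecMul A (a : Fin n → ℂ) (b : Fin n → ℂ))
      map_smul' := fun c a => Subtype.ext
        (by simpa using Matrix.smul_vecMul c (a : Fin n → ℂ) A) } with hf
  obtain ⟨μ, hμ⟩ := Module.End.exists_eigenvalue f
  obtain ⟨w, hw⟩ := hμ.exists_hasEigenvector
  have hwA : (w : Fin n → ℂ) ᵥ* A = μ • (w : Fin n → ℂ) := by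
    have := hw.apply_eq_smul
    exact congrArg Subtype.val this
  have hwB : (w : Fin n → ℂ) ᵥ* B = 0 := by
    have := w.2 0
    rwa [pow_zero, Matrix.one_mul] at this
  have hw0 : (w : Fin n → ℂ) ≠ 0 := fun h => hw.2 (Subtype.ext h)
  -- μ is in the spectrum of A
  have hspec : μ ∈ spectrum ℂ A := by
    have h1 : Module.End.HasEigenvalue (Matrix.toLinAlgEquiv' Aᵀ) μ := by
      refine Module.End.hasEigenvalue_of_hasEigenvector
        ⟨Module.End.mem_eigenspace_iff.2 ?_, hw0⟩
      rw [Matrix.toLinAlgEquiv'_apply, Matrix.mulVec_transpose, hwA]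
    have h2 : μ ∈ spectrum ℂ Aᵀ := by
      rw [← AlgEquiv.spectrum_eq (Matrix.toLinAlgEquiv' :
        Matrix (Fin n) (Fin n) ℂ ≃ₐ[ℂ] _) Aᵀ]
      exact Module.End.hasEigenvalue_iff_mem_spectrum.1 h1
    rw [spectrum.mem_iff] at h2 ⊢
    intro hu
    apply h2
    have hT : algebraMap ℂ (Matrix (Fin n) (Fin n) ℂ) μ - Aᵀ
        = (algebraMap ℂ (Matrix (Fin n) (Fin n) ℂ) μ - A)ᵀ := by
      rw [Matrix.transpose_sub]
      congr 1
      simp [Algebra.algebraMap_eq_smul_one, Matrix.transpose_smul]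
    rw [hT, Matrix.isUnit_iff_isUnit_det, Matrix.det_transpose,
      ← Matrix.isUnit_iff_isUnit_det]
    exact hu
  -- |μ| < 1
  have hnorm : ‖μ‖ < 1 := by
    have hle : (‖μ‖₊ : ENNReal) ≤ spectralRadius ℂ A := by
      rw [spectralRadius]
      exact le_iSup₂ (f := fun k (_ : k ∈ spectrum ℂ A) => (‖k‖₊ : ENNReal)) μ hspec
    have hlt := lt_of_le_of_lt hle hA
    rw [show (1 : ENNReal) = ((1 : NNReal) : ENNReal) from rfl, ENNReal.coe_lt_coe] at hlt
    exact_mod_cast hlt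
  -- quadratic form computation
  have hAstar : Aᴴ *ᵥ star (w : Fin n → ℂ) = star μ • star (w : Fin n → ℂ) := by
    rw [Matrix.mulVec_conjTranspose, star_star, hwA, star_smul]
  have hBstar : Bᴴ *ᵥ star (w : Fin n → ℂ) = 0 := by
    rw [Matrix.mulVec_conjTranspose, star_star, hwB, star_zero]
  have hkey := congrArg
    (fun M : Matrix (Fin n) (Fin n) ℂ => (w : Fin n → ℂ) ⬝ᵥ (M *ᵥ star (w : Fin n → ℂ))) heq
  simp only [Matrix.add_mulVec, Matrix.sub_mulVec, Matrix.zero_mulVec, dotProduct_add,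
    dotProduct_sub, dotProduct_zero, ← Matrix.mulVec_mulVec, hAstar, hBstar,
    Matrix.mulVec_smul, Matrix.mulVec_zero, dotProduct_smul, Matrix.dotProduct_mulVec,
    hwA, hwB, Matrix.smul_vecMul, Matrix.zero_vecMul, smul_dotProduct, zero_dotProduct,
    smul_eq_mul, mul_zero, add_zero] at hkey
  set s : ℂ := ((w : Fin n → ℂ) ᵥ* X) ⬝ᵥ star (w : Fin n → ℂ) with hs
  have hspos : 0 < s := by
    have := hX.dotProduct_mulVec_pos (x := star (w : Fin n → ℂ)) (by
      intro h
      apply hw0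
      have := congrArg star h
      rwa [star_star, star_zero] at this)
    rwa [star_star, Matrix.dotProduct_mulVec] at this
  have hfac : (μ * star μ - 1) * s = 0 := by
    rw [hs] at hkey ⊢
    linear_combination hkey
  have hsne : s ≠ 0 := hspos.ne'
  have hμne : μ * star μ - 1 ≠ 0 := by
    have h1 : μ * star μ = (Complex.normSq μ : ℂ) := by
      rw [Complex.star_def, Complex.mul_conj]
    rw [h1, sub_ne_zero]
    intro h
    have : Complex.normSq μ = 1 := by exact_mod_cast h
    have h2 : Complex.normSq μ < 1 := by
      rw [Complex.normSq_eq_norm_sq]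
      have : ‖μ‖ < 1 := hnorm
      nlinarith [norm_nonneg μ]
    linarith
  rcases mul_eq_zero.mp hfac with h | h
  · exact hμne h
  · exact hsne h

end Aux

/-- if the Lyapunov-like equation admits a solution with `X ≻ 0`, `W ≻ 0`
and `[X R; Rᴴ W] ⪰ 0`, then `(A, B)` is controllable. -/
theorem controllable_of_cone_posdef_solution {n m : ℕ}
    (A : Matrix (Fin n) (Fin n) ℂ) (B : Matrix (Fin n) (Fin m) ℂ)
    (hA : spectralRadius ℂ A < 1)
    (X : Matrix (Fin n) (Fin n) ℂ) (R : Matrix (Fin n) (Fin m) ℂ)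
    (W : Matrix (Fin m) (Fin m) ℂ)
    (hX : X.PosDef) (hW : W.PosDef)
    (heq : A * X * Aᴴ - X + B * Rᴴ * Aᴴ + A * R * Bᴴ + B * W * Bᴴ = 0)
    (hpsd : (fromBlocks X R Rᴴ W).PosSemidef) :
    (ctrbMatrix A B).rank = n := by
  have hinj : ∀ v : Fin n → ℂ, v ᵥ* ctrbMatrix A B = 0 → v = 0 := by
    intro v hv
    refine eig_contra A B hA X R W hX heq v (vecMul_pow_zero A B v ?_)
    intro k hk
    ext j
    have := congrFun hv (⟨k, hk⟩, j)
    simpa [ctrbMatrix, Matrix.vecMul, dotProduct] using this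
  have hker : LinearMap.ker (ctrbMatrix A B)ᵀ.mulVecLin = ⊥ := by
    rw [Matrix.ker_mulVecLin_eq_bot_iff]
    intro v hv0
    exact hinj v (by rwa [Matrix.mulVec_transpose] at hv0)
  have hrn := LinearMap.finrank_range_add_finrank_ker (ctrbMatrix A B)ᵀ.mulVecLin
  rw [hker, finrank_bot, add_zero] at hrn
  rw [← Matrix.rank_transpose, Matrix.rank, hrn]
  simp
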